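/- Let n be even with n ≥ 4, and let U̅_2 be the n-vertex unicyclic graph obtained from the path v_1 v_2 … v_n by adding the edge v_1 v_3. Then τ(U̅_2) = 3n²/4 − n − 1. -/

import Mathlib

open SimpleGraph Finset

/-- The eccentricity of a vertex `v` in a graph `G`: the maximum distance from `v`
to any vertex of `G`. -/
noncomputable def ecc {V : Type} [Fintype V] (G : SimpleGraph V) (v : V) : ℕ :=
  Finset.univ.sup fun w => G.dist v w

/-- The total-eccentricity index `τ(G) = ∑_{v ∈ V(G)} e_G(v)`. -/
noncomputable def totalEcc {V : Type} [Fintype V] (G : SimpleGraph V) : ℕ :=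
  ∑ v : V, ecc G v


section Aux
variable {n : ℕ}

def U2aux (n : ℕ) (h2 : 2 < n) : SimpleGraph (Fin n) :=
  pathGraph n ⊔ fromEdgeSet {s((⟨0, by omega⟩ : Fin n), (⟨2, h2⟩ : Fin n))}

lemma U2aux_adj (h2 : 2 < n) (u v : Fin n) :
    (U2aux n h2).Adj u v ↔ (u.val + 1 = v.val ∨ v.val + 1 = u.val) ∨
      ((u.val = 0 ∧ v.val = 2) ∨ (u.val = 2 ∧ v.val = 0)) := by
  simp only [U2aux, SimpleGraph.sup_adj, pathGraph_adj, fromEdgeSet_adj,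
    Set.mem_singleton_iff, Sym2.eq_iff]
  constructor
  · rintro (h | ⟨(⟨h1, h2⟩ | ⟨h1, h2⟩), hne⟩)
    · exact Or.inl h
    · subst h1; subst h2; right; left; constructor <;> rfl
    · subst h1; subst h2; right; right; constructor <;> rfl
  · rintro (h | (⟨h1, h2'⟩ | ⟨h1, h2'⟩))
    · exact Or.inl h
    · right
      refine ⟨Or.inl ⟨?_, ?_⟩, ?_⟩ <;> first
        | (apply Fin.ext; simp [h1, h2'])
        | (intro h; apply_fun Fin.val at h; omega)
    · right
      refine ⟨Or.inr ⟨?_, ?_⟩, ?_⟩ <;> first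
        | (apply Fin.ext; simp [h1, h2'])
        | (intro h; apply_fun Fin.val at h; omega)

lemma walk_lb {V : Type} {G : SimpleGraph V} (f : V → ℤ)
    (hf : ∀ u v, G.Adj u v → |f u - f v| ≤ 1) {u v : V} (p : G.Walk u v) :
    |f u - f v| ≤ p.length := by
  induction p with
  | nil => simp
  | @cons a b c h p ih =>
      have := hf a b h
      calc |f a - f c| ≤ |f a - f b| + |f b - f c| := abs_sub_le _ _ _
        _ ≤ 1 + p.length := add_le_add this ih
        _ = (p.cons h).length := by simp [SimpleGraph.Walk.length_cons]; ring

lemma pathGraph_walk (i j : Fin n) (h : i.val ≤ j.val) :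
    ∃ p : (pathGraph n).Walk i j, p.length = j.val - i.val := by
  obtain ⟨k, hk⟩ : ∃ k, j.val - i.val = k := ⟨_, rfl⟩
  induction k generalizing i with
  | zero =>
      have : i = j := Fin.ext (by omega)
      subst this; exact ⟨.nil, by simp⟩
  | succ k ih =>
      have hlt : i.val < j.val := by omega
      have hi1 : i.val + 1 < n := by omega
      set i' : Fin n := ⟨i.val + 1, hi1⟩ with hi'
      have hadj : (pathGraph n).Adj i i' := by rw [pathGraph_adj]; left; rfl
      obtain ⟨p, hp⟩ := ih i' (by simp [hi']; omega) (by simp [hi']; omega)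
      exact ⟨p.cons hadj, by simp [hp, hi']; omega⟩

lemma U2aux_connected (h2 : 2 < n) : (U2aux n h2).Connected := by
  have hc : (pathGraph n).Connected := by
    obtain ⟨m, rfl⟩ : ∃ m, n = m + 1 := ⟨n - 1, by omega⟩
    exact pathGraph_connected m
  exact hc.mono le_sup_left

lemma U2aux_dist_le (h2 : 2 < n) (i j : Fin n) (h : i.val ≤ j.val) :
    (U2aux n h2).dist i j ≤ j.val - i.val := by
  obtain ⟨p, hp⟩ := pathGraph_walk i j h
  calc (U2aux n h2).dist i j ≤ (p.mapLe le_sup_left).length := SimpleGraph.dist_le _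
    _ = j.val - i.val := by simp [hp]

lemma U2aux_dist_le' (h2 : 2 < n) (i j : Fin n) (h : j.val ≤ i.val) :
    (U2aux n h2).dist i j ≤ i.val - j.val := by
  rw [SimpleGraph.dist_comm]; exact U2aux_dist_le h2 j i h

lemma U2aux_adj' (h2 : 2 < n) (u v : Fin n) (hu : u.val = 2) (hv : v.val = 0) :
    (U2aux n h2).Adj u v := by
  rw [U2aux_adj]; right; right; exact ⟨hu, hv⟩

lemma U2aux_dist_zero_le (h2 : 2 < n) (i z : Fin n) (hz : z.val = 0)
    (hi : 2 ≤ i.val) : (U2aux n h2).dist i z ≤ i.val - 1 := by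
  obtain ⟨p, hp⟩ := pathGraph_walk (⟨2, h2⟩ : Fin n) i hi
  refine le_trans (SimpleGraph.dist_le
    (((p.mapLe (show pathGraph n ≤ U2aux n h2 from le_sup_left)).reverse.append
      ((U2aux_adj' h2 ⟨2, h2⟩ z rfl hz).toWalk)))) ?_
  simp [hp]
  omega

lemma U2aux_dist_lb (h2 : 2 < n) (f : Fin n → ℤ)
    (hf : ∀ u v, (U2aux n h2).Adj u v → |f u - f v| ≤ 1) (u v : Fin n) :
    f u - f v ≤ ((U2aux n h2).dist u v : ℤ) := by
  obtain ⟨p, hp⟩ :=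
    (((U2aux_connected h2).preconnected u v)).exists_walk_length_eq_dist
  have h := walk_lb f hf p
  refine (le_abs_self _).trans (h.trans ?_)
  exact_mod_cast hp.le

lemma U2aux_dist_last_lb (h2 : 2 < n) (i l : Fin n) (hl : l.val = n - 1) :
    (n : ℤ) - 1 - max (i.val : ℤ) 1 ≤ ((U2aux n h2).dist i l : ℤ) := by
  have h := U2aux_dist_lb h2 (fun v => max (v.val : ℤ) 1) ?_ l i
  · rw [SimpleGraph.dist_comm]
    have hl' : (l.val : ℤ) = (n : ℤ) - 1 := by omega
    omega
  · intro u v hadj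
    rw [U2aux_adj] at hadj
    rw [abs_le]
    omega

lemma U2aux_dist_zero_lb (h2 : 2 < n) (i z : Fin n) (hz : z.val = 0) :
    (i.val : ℤ) - 1 ≤ ((U2aux n h2).dist i z : ℤ) := by
  have h := U2aux_dist_lb h2 (fun v => max ((v.val : ℤ) - 1) 0) ?_ i z
  · have hz' : (z.val : ℤ) = 0 := by omega
    omega
  · intro u v hadj
    rw [U2aux_adj] at hadj
    rw [abs_le]
    omega

lemma ecc_zero (h2 : 2 < n) (hn : 4 ≤ n) (z : Fin n) (hz : z.val = 0) :
    ecc (U2aux n h2) z = n - 2 := by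
  simp only [ecc]
  apply le_antisymm
  · apply Finset.sup_le
    intro j _
    by_cases hj : j.val ≤ 1
    · have := U2aux_dist_le h2 z j (by omega)
      omega
    · have ht := (U2aux_connected h2).dist_triangle
        (u := z) (v := (⟨2, h2⟩ : Fin n)) (w := j)
      have h02 : (U2aux n h2).dist z ⟨2, h2⟩ ≤ 1 := by
        rw [SimpleGraph.dist_comm]
        have := SimpleGraph.dist_le ((U2aux_adj' h2 ⟨2, h2⟩ z rfl hz).toWalk)
        simpa using this
      have h2j : (U2aux n h2).dist ⟨2, h2⟩ j ≤ j.val - 2 := by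
        have := U2aux_dist_le h2 ⟨2, h2⟩ j (by simp; omega)
        simpa using this
      omega
  · refine le_trans ?_ (Finset.le_sup (Finset.mem_univ (⟨n - 1, by omega⟩ : Fin n)))
    have hlb := U2aux_dist_last_lb h2 z ⟨n - 1, by omega⟩ (by simp)
    have hz' : (z.val : ℤ) = 0 := by omega
    omega

lemma ecc_posv (h2 : 2 < n) (hn : 4 ≤ n) (i : Fin n) (hi : 1 ≤ i.val) :
    ecc (U2aux n h2) i = max (i.val - 1) (n - 1 - i.val) := by
  simp only [ecc]
  apply le_antisymm
  · apply Finset.sup_le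
    intro j _
    by_cases hj : j.val = 0
    · by_cases hi2 : 2 ≤ i.val
      · have := U2aux_dist_zero_le h2 i j hj hi2
        omega
      · have := U2aux_dist_le' h2 i j (by omega)
        omega
    · rcases le_or_gt j.val i.val with h | h
      · have := U2aux_dist_le' h2 i j h
        omega
      · have := U2aux_dist_le h2 i j h.le
        have := j.isLt
        omega
  · apply max_le
    · refine le_trans ?_ (Finset.le_sup (Finset.mem_univ (⟨0, by omega⟩ : Fin n)))
      have hlb := U2aux_dist_zero_lb h2 i ⟨0, by omega⟩ rfl
      omega
    · refine le_trans ?_ (Finset.le_sup (Finset.mem_univ (⟨n - 1, by omega⟩ : Fin n)))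
      have hlb := U2aux_dist_last_lb h2 i ⟨n - 1, by omega⟩ (by simp)
      omega

lemma gauss (k : ℕ) : (∑ i ∈ Finset.range k, (i : ℚ)) = k * (k - 1) / 2 := by
  induction k with
  | zero => simp
  | succ p ih => rw [Finset.sum_range_succ, ih]; push_cast; ring

lemma totalEcc_U2aux (h2 : 2 < n) (hn : 4 ≤ n) (hev : Even n) :
    (totalEcc (U2aux n h2) : ℚ) = 3 * n ^ 2 / 4 - n - 1 := by
  obtain ⟨m, hm⟩ := hev
  have hm2 : 2 ≤ m := by omega
  -- the eccentricity as a rational-valued function of the index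
  set g : ℕ → ℚ := fun k =>
    if k = 0 then (n : ℚ) - 2 else max ((k : ℚ) - 1) ((n : ℚ) - 1 - k) with hg
  have hval : ∀ v : Fin n, (ecc (U2aux n h2) v : ℚ) = g v.val := by
    intro v
    by_cases hv : v.val = 0
    · rw [ecc_zero h2 hn v hv, hg]
      simp only [hv, if_pos]
      push_cast [Nat.cast_sub (by omega : 2 ≤ n)]
      ring
    · rw [ecc_posv h2 hn v (by omega), hg]
      simp only [hv, if_neg, ite_false]
      have h1 : 1 ≤ v.val := by omega
      have h2' : v.val ≤ n - 1 := by have := v.isLt; omega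
      push_cast [Nat.cast_max]
      rw [Nat.cast_sub h1, Nat.cast_sub (by omega : v.val ≤ n - 1),
        Nat.cast_sub (by omega : 1 ≤ n)]
      push_cast
      ring_nf
  have hsum : (totalEcc (U2aux n h2) : ℚ) = ∑ i ∈ Finset.range n, g i := by
    rw [totalEcc]
    push_cast
    rw [← Fin.sum_univ_eq_sum_range g n]
    exact Finset.sum_congr rfl fun v _ => hval v
  rw [hsum]
  rw [Finset.range_eq_Ico, ← Finset.sum_Ico_consecutive g (Nat.zero_le m) (by omega : m ≤ n),
    ← Finset.sum_Ico_consecutive g (Nat.zero_le 1) (by omega : 1 ≤ m)]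
  have e0 : ∑ i ∈ Finset.Ico 0 1, g i = (n : ℚ) - 2 := by
    simp [hg]
  have e1 : ∑ i ∈ Finset.Ico 1 m, g i = ∑ i ∈ Finset.Ico 1 m, ((n : ℚ) - 1 - i) := by
    refine Finset.sum_congr rfl fun i hi => ?_
    rw [Finset.mem_Ico] at hi
    rw [hg]
    simp only []
    rw [if_neg (by omega : ¬ i = 0), max_eq_right]
    have : (i : ℚ) ≤ (m : ℚ) - 1 := by exact_mod_cast (by omega : (i:ℤ) ≤ (m:ℤ) - 1)
    have hnm : (n : ℚ) = m + m := by exact_mod_cast congrArg (Nat.cast : ℕ → ℚ) hm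
    linarith
  have e2 : ∑ i ∈ Finset.Ico m n, g i = ∑ i ∈ Finset.Ico m n, ((i : ℚ) - 1) := by
    refine Finset.sum_congr rfl fun i hi => ?_
    rw [Finset.mem_Ico] at hi
    rw [hg]
    simp only []
    rw [if_neg (by omega : ¬ i = 0), max_eq_left]
    have : (m : ℚ) ≤ (i : ℚ) := by exact_mod_cast hi.1
    have hnm : (n : ℚ) = m + m := by exact_mod_cast congrArg (Nat.cast : ℕ → ℚ) hm
    linarith
  rw [e0, e1, e2]
  have key : ∀ a b : ℕ, a ≤ b → ∑ i ∈ Finset.Ico a b, (i : ℚ)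
      = b * (b - 1) / 2 - a * (a - 1) / 2 := by
    intro a b hab
    rw [Finset.sum_Ico_eq_sub _ hab, gauss, gauss]
  have s1 : ∑ i ∈ Finset.Ico 1 m, ((n : ℚ) - 1 - i)
      = (m - 1) * ((n : ℚ) - 1) - (m * (m - 1) / 2) := by
    rw [Finset.sum_sub_distrib, Finset.sum_const, Nat.card_Ico, key 1 m (by omega),
      nsmul_eq_mul, Nat.cast_sub (by omega : 1 ≤ m)]
    push_cast
    ring
  have s2 : ∑ i ∈ Finset.Ico m n, ((i : ℚ) - 1)
      = (n * (n - 1) / 2 - m * (m - 1) / 2) - (n - m) := by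
    rw [Finset.sum_sub_distrib, Finset.sum_const, Nat.card_Ico, key m n (by omega),
      nsmul_eq_mul, Nat.cast_sub (by omega : m ≤ n)]
    push_cast
    ring
  rw [s1, s2]
  have hnm : (n : ℚ) = m + m := by exact_mod_cast congrArg (Nat.cast : ℕ → ℚ) hm
  rw [hnm]
  ring

end Aux

/-- For even `n ≥ 4`, the unicyclic graph `U̅₂` obtained from the path `v₁v₂⋯vₙ` by
adding the edge `v₁v₃` satisfies `τ(U̅₂) = 3n²/4 - n - 1`. -/
theorem totalEcc_U2 (n : ℕ) (hn : 4 ≤ n) (hev : Even n) :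
    (totalEcc (pathGraph n ⊔
        fromEdgeSet {s((⟨0, by omega⟩ : Fin n), (⟨2, by omega⟩ : Fin n))}) : ℚ) =
      3 * n ^ 2 / 4 - n - 1 := by
  have h2 : 2 < n := by omega
  have hG : (pathGraph n ⊔
      fromEdgeSet {s((⟨0, by omega⟩ : Fin n), (⟨2, by omega⟩ : Fin n))}) = U2aux n h2 := rfl
  rw [hG]
  exact totalEcc_U2aux h2 hn hev
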